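/- Let μ be a partition with μ₁ ≤ n and let 1 ≤ k ≤ n. Then e*_k(μ̃₁,…,μ̃_n) = ∑ over all generalized horizontal strips H of size k in the Ferrers diagram of μ of ∏_r (c_r!), where H is a set of k cells of the diagram of μ with no two cells in the same column and c_r is the number of cells of H in row r. -/

import Mathlib

open scoped Classical

/-- The `k`-th elementary shifted symmetric polynomial. -/
noncomputable def estar (n k : ℕ) (x : Fin n → ℂ) : ℂ :=
  ∑ i : Fin k → Fin n, if StrictMono i then
    ∏ t : Fin k, (x (i t) + ((k : ℂ) - 1 - ((t : ℕ) : ℂ))) else 0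

/-- The conjugate (transpose) partition (0-indexed). -/
noncomputable def conjP (n : ℕ) (μ : ℕ → ℕ) (j : ℕ) : ℕ :=
  ((Finset.range n).filter (fun i => j + 1 ≤ μ i)).card

noncomputable def wgt (n : ℕ) (H : Finset (ℕ × ℕ)) : ℕ :=
  ∏ r ∈ Finset.range n, Nat.factorial ((H.filter (fun p => p.1 = r)).card)

noncomputable def strips (n : ℕ) (μ : ℕ → ℕ) (J : Finset ℕ) : Finset (Finset (ℕ × ℕ)) :=
  ((Finset.range n ×ˢ Finset.range n).powerset).filter
    (fun H => (∀ p ∈ H, p.2 < μ p.1) ∧ H.image Prod.snd = J ∧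
      ∀ p ∈ H, ∀ q ∈ H, p.2 = q.2 → p = q)

noncomputable def SS (n : ℕ) (μ : ℕ → ℕ) (J : Finset ℕ) : ℕ :=
  ∑ H ∈ strips n μ J, wgt n H

noncomputable def imN {n k : ℕ} (i : Fin k → Fin n) : Finset ℕ :=
  Finset.univ.image (fun t => (i t : ℕ))

lemma mem_imN {n k : ℕ} {i : Fin k → Fin n} {j : ℕ} :
    j ∈ imN i ↔ ∃ t, (i t : ℕ) = j := by simp [imN]

lemma mem_strips {n : ℕ} {μ : ℕ → ℕ} {J : Finset ℕ} {H : Finset (ℕ × ℕ)} :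
    H ∈ strips n μ J ↔ H ⊆ Finset.range n ×ˢ Finset.range n ∧ (∀ p ∈ H, p.2 < μ p.1) ∧
      H.image Prod.snd = J ∧ ∀ p ∈ H, ∀ q ∈ H, p.2 = q.2 → p = q := by
  simp [strips, and_assoc]

lemma card_of_strips {n : ℕ} {μ : ℕ → ℕ} {J : Finset ℕ} {H : Finset (ℕ × ℕ)}
    (hH : H ∈ strips n μ J) : H.card = J.card := by
  rw [mem_strips] at hH
  obtain ⟨-, -, him, hinj⟩ := hH
  rw [← him, Finset.card_image_of_injOn]
  intro p hp q hq hpq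
  exact hinj p hp q hq hpq

lemma SS_empty (n : ℕ) (μ : ℕ → ℕ) : SS n μ ∅ = 1 := by
  have h : strips n μ ∅ = {∅} := by
    ext H
    simp only [mem_strips, Finset.mem_singleton]
    constructor
    · rintro ⟨-, -, him, -⟩
      exact Finset.image_eq_empty.mp him
    · rintro rfl
      simp
  simp [SS, h, wgt]

lemma wgt_insert (n : ℕ) (H' : Finset (ℕ × ℕ)) (r0 j0 : ℕ) (hr0 : r0 ∈ Finset.range n)
    (hnm : ∀ r, (r, j0) ∉ H') :
    wgt n (insert (r0, j0) H') = ((H'.filter (fun p => p.1 = r0)).card + 1) * wgt n H' := by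
  rw [wgt, wgt, ← Finset.mul_prod_erase _ _ hr0, ← Finset.mul_prod_erase _ _ hr0]
  have h1 : ((insert (r0, j0) H').filter (fun p => p.1 = r0))
      = insert (r0, j0) (H'.filter (fun p => p.1 = r0)) := by
    rw [Finset.filter_insert]
    simp
  have h2 : (insert ((r0 : ℕ), j0) (H'.filter (fun p => p.1 = r0))).card
      = (H'.filter (fun p => p.1 = r0)).card + 1 := by
    apply Finset.card_insert_of_notMem
    intro h
    exact hnm r0 (Finset.mem_filter.mp h).1
  have h3 : ∀ r ∈ (Finset.range n).erase r0,
      ((insert (r0, j0) H').filter (fun p => p.1 = r)) = H'.filter (fun p => p.1 = r) := by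
    intro r hr
    rw [Finset.filter_insert, if_neg]
    simp only
    exact fun h => (Finset.mem_erase.mp hr).1 (h ▸ rfl)
  rw [h1, h2, Finset.prod_congr rfl (fun r hr => by rw [h3 r hr]), Nat.factorial_succ]
  ring

lemma SS_rec (n : ℕ) (μ : ℕ → ℕ) (hvan : ∀ i, n ≤ i → μ i = 0)
    (J : Finset ℕ) (hJ : J.Nonempty) (hJn : ∀ j ∈ J, j < n) :
    SS n μ J = (conjP n μ (J.min' hJ) + (J.card - 1)) * SS n μ (J.erase (J.min' hJ)) := by
  set j0 := J.min' hJ with hj0def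
  set J' := J.erase j0 with hJ'def
  have hj0J : j0 ∈ J := J.min'_mem hJ
  have hj0J' : j0 ∉ J' := Finset.notMem_erase _ _
  have hj0n : j0 < n := hJn j0 hj0J
  set V : Finset ℕ := (Finset.range n).filter (fun r => j0 + 1 ≤ μ r) with hVdef
  have hVcard : V.card = conjP n μ j0 := rfl
  -- cells of a strip over J' do not have column j0, and their rows are valid for j0
  have hnotmem : ∀ H' ∈ strips n μ J', ∀ r, (r, j0) ∉ H' := by
    intro H' hH' r hr
    obtain ⟨-, -, him, -⟩ := mem_strips.mp hH'
    exact hj0J' (him ▸ Finset.mem_image_of_mem Prod.snd hr)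
  have hrowsV : ∀ H' ∈ strips n μ J', ∀ p ∈ H', p.1 ∈ V := by
    intro H' hH' p hp
    obtain ⟨hsub, hval, him, -⟩ := mem_strips.mp hH'
    have h1 : p.1 ∈ Finset.range n := (Finset.mem_product.mp (hsub hp)).1
    have h2 : p.2 ∈ J' := him ▸ Finset.mem_image_of_mem Prod.snd hp
    have h3 : j0 ≤ p.2 := Finset.min'_le _ _ (Finset.mem_of_mem_erase h2)
    have h4 : p.2 ≠ j0 := (Finset.mem_erase.mp h2).1
    have h5 : p.2 < μ p.1 := hval p hp
    refine Finset.mem_filter.mpr ⟨h1, by omega⟩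
  have key : ∑ H ∈ strips n μ J, wgt n H
      = ∑ p ∈ V ×ˢ strips n μ J', wgt n (insert (p.1, j0) p.2) := by
    symm
    apply Finset.sum_bij (fun p _ => insert (p.1, j0) p.2)
    · rintro ⟨r0, H'⟩ hp
      obtain ⟨hr0, hH'⟩ := Finset.mem_product.mp hp
      obtain ⟨hsub, hval, him, hinj⟩ := mem_strips.mp hH'
      obtain ⟨hr0n, hr0μ⟩ := Finset.mem_filter.mp hr0
      rw [mem_strips]
      refine ⟨?_, ?_, ?_, ?_⟩
      · exact Finset.insert_subset (Finset.mem_product.mpr ⟨hr0n, Finset.mem_range.mpr hj0n⟩) hsub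
      · intro p hp'
        rcases Finset.mem_insert.mp hp' with rfl | h
        · exact hr0μ
        · exact hval p h
      · rw [Finset.image_insert, him]
        exact Finset.insert_erase hj0J
      · intro p hp' q hq' hpq
        rcases Finset.mem_insert.mp hp' with rfl | hpH <;>
          rcases Finset.mem_insert.mp hq' with rfl | hqH
        · rfl
        · exfalso
          apply hj0J'
          rw [← him]
          exact Finset.mem_image.mpr ⟨q, hqH, hpq.symm⟩
        · exfalso
          apply hj0J'
          rw [← him]
          exact Finset.mem_image.mpr ⟨p, hpH, hpq⟩
        · exact hinj p hpH q hqH hpq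
    · rintro ⟨r0, H'⟩ hp ⟨r1, H1'⟩ hq heq
      obtain ⟨hr0, hH'⟩ := Finset.mem_product.mp hp
      obtain ⟨hr1, hH1'⟩ := Finset.mem_product.mp hq
      simp only at heq
      have hr : r0 = r1 := by
        have : ((r0, j0) : ℕ × ℕ) ∈ insert (r1, j0) H1' := heq ▸ Finset.mem_insert_self _ _
        rcases Finset.mem_insert.mp this with h | h
        · exact (Prod.mk.injEq _ _ _ _ ▸ h).1
        · exact absurd h (hnotmem H1' hH1' r0)
      subst hr
      have hHH : H' = H1' := by
        have e1 : (insert ((r0 : ℕ), j0) H').erase (r0, j0) = H' :=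
          Finset.erase_insert (hnotmem H' hH' r0)
        have e2 : (insert ((r0 : ℕ), j0) H1').erase (r0, j0) = H1' :=
          Finset.erase_insert (hnotmem H1' hH1' r0)
        rw [← e1, heq, e2]
      rw [hHH]
    · intro H hH
      obtain ⟨hsub, hval, him, hinj⟩ := mem_strips.mp hH
      have : j0 ∈ H.image Prod.snd := him ▸ hj0J
      obtain ⟨q, hqH, hq2⟩ := Finset.mem_image.mp this
      refine ⟨(q.1, H.erase q), Finset.mem_product.mpr ⟨?_, ?_⟩, ?_⟩
      · refine Finset.mem_filter.mpr ⟨(Finset.mem_product.mp (hsub hqH)).1, ?_⟩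
        show j0 + 1 ≤ μ q.1
        have h5 := hval q hqH
        rw [hq2] at h5
        omega
      · rw [mem_strips]
        refine ⟨(Finset.erase_subset _ _).trans hsub, fun p hp => hval p (Finset.mem_of_mem_erase hp),
          ?_, fun p hp q' hq' h => hinj p (Finset.mem_of_mem_erase hp) q' (Finset.mem_of_mem_erase hq') h⟩
        ext j
        simp only [Finset.mem_image]
        constructor
        · rintro ⟨p, hp, rfl⟩
          have hpH := Finset.mem_of_mem_erase hp
          refine Finset.mem_erase.mpr ⟨?_, him ▸ Finset.mem_image_of_mem Prod.snd hpH⟩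
          intro hcol
          exact (Finset.mem_erase.mp hp).1 (hinj p hpH q hqH (hcol.trans hq2.symm))
        · intro hj
          obtain ⟨hjne, hjJ⟩ := Finset.mem_erase.mp hj
          rw [← him] at hjJ
          obtain ⟨p, hpH, rfl⟩ := Finset.mem_image.mp hjJ
          refine ⟨p, Finset.mem_erase.mpr ⟨?_, hpH⟩, rfl⟩
          rintro rfl
          exact hjne hq2
      · simp only
        have hq : q = (q.1, j0) := by rw [← hq2]
        rw [← hq]
        exact Finset.insert_erase hqH
    · intro p hp
      rfl
  have inner : ∀ H' ∈ strips n μ J', ∑ r ∈ V, wgt n (insert (r, j0) H')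
      = (conjP n μ j0 + (J.card - 1)) * wgt n H' := by
    intro H' hH'
    have hcardH' : H'.card = J.card - 1 := by
      rw [card_of_strips hH', hJ'def, Finset.card_erase_of_mem hj0J]
    have hw : ∀ r ∈ V, wgt n (insert (r, j0) H')
        = ((H'.filter (fun p => p.1 = r)).card + 1) * wgt n H' := by
      intro r hr
      exact wgt_insert n H' r j0 (Finset.mem_filter.mp hr).1 (hnotmem H' hH')
    have hsum : ∑ r ∈ V, (H'.filter (fun p => p.1 = r)).card = H'.card :=
      (Finset.card_eq_sum_card_fiberwise (hrowsV H' hH')).symm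
    rw [Finset.sum_congr rfl hw, ← Finset.sum_mul, Finset.sum_add_distrib, hsum,
      Finset.sum_const, smul_eq_mul, mul_one, hcardH', hVcard, Nat.add_comm]
  rw [SS, key, Finset.sum_product_right]
  simp only
  rw [Finset.sum_congr rfl inner, ← Finset.mul_sum]
  rfl


lemma imN_succ {n k : ℕ} (i : Fin (k+1) → Fin n) (hi : StrictMono i) :
    imN (i ∘ Fin.succ) = (imN i).erase (i 0 : ℕ) := by
  ext j
  simp only [mem_imN, Finset.mem_erase, Function.comp_apply]
  constructor
  · rintro ⟨t, rfl⟩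
    refine ⟨?_, t.succ, rfl⟩
    intro h
    exact (Fin.succ_ne_zero t) (hi.injective (Fin.val_injective h))
  · rintro ⟨hne, t, rfl⟩
    rcases Fin.eq_zero_or_eq_succ t with rfl | ⟨s, rfl⟩
    · exact absurd rfl hne
    · exact ⟨s, rfl⟩

lemma min'_imN {n k : ℕ} (i : Fin (k+1) → Fin n) (hi : StrictMono i)
    (h : (imN i).Nonempty) : (imN i).min' h = (i 0 : ℕ) := by
  apply le_antisymm
  · exact Finset.min'_le _ _ (mem_imN.mpr ⟨0, rfl⟩)
  · apply Finset.le_min'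
    intro y hy
    obtain ⟨t, rfl⟩ := mem_imN.mp hy
    exact hi.monotone (Fin.zero_le t)

lemma card_imN {n k : ℕ} (i : Fin k → Fin n) (hi : StrictMono i) : (imN i).card = k := by
  rw [imN, Finset.card_image_of_injective, Finset.card_univ, Fintype.card_fin]
  exact fun a b hab => hi.injective (Fin.val_injective hab)

lemma SS_prod (n : ℕ) (μ : ℕ → ℕ) (hvan : ∀ i, n ≤ i → μ i = 0) :
    ∀ (k : ℕ) (i : Fin k → Fin n), StrictMono i →
    SS n μ (imN i) = ∏ t : Fin k, (conjP n μ (i t : ℕ) + (k - 1 - (t : ℕ))) := by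
  intro k
  induction k with
  | zero => intro i hi; simpa [imN] using SS_empty n μ
  | succ k ih =>
    intro i hi
    have hne : (imN i).Nonempty := ⟨(i 0 : ℕ), mem_imN.mpr ⟨0, rfl⟩⟩
    have hJn : ∀ j ∈ imN i, j < n := by
      intro j hj
      obtain ⟨t, rfl⟩ := mem_imN.mp hj
      exact (i t).isLt
    rw [SS_rec n μ hvan _ hne hJn, min'_imN i hi, card_imN i hi, ← imN_succ i hi,
      ih (i ∘ Fin.succ) (hi.comp Fin.strictMono_succ)]
    rw [Fin.prod_univ_succ]
    have h0 : k + 1 - 1 - ((0 : Fin (k+1)) : ℕ) = k := by simp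
    rw [h0]
    congr 1
    apply Finset.prod_congr rfl
    intro t _
    have ht : (t : ℕ) < k := t.isLt
    have h2 : k + 1 - 1 - ((t.succ : Fin (k+1)) : ℕ) = k - 1 - (t : ℕ) := by
      simp only [Fin.val_succ]
      omega
    rw [h2]
    rfl


lemma imN_inj {n k : ℕ} {i i' : Fin k → Fin n} (hi : StrictMono i) (hi' : StrictMono i')
    (h : imN i = imN i') : i = i' := by
  have hc : (imN i).card = k := card_imN i hi
  have f1 : (fun t => ((i t : ℕ))) = (imN i).orderEmbOfFin hc :=
    Finset.orderEmbOfFin_unique hc (fun t => mem_imN.mpr ⟨t, rfl⟩) (fun a b hab => hi hab)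
  have f2 : (fun t => ((i' t : ℕ))) = (imN i).orderEmbOfFin hc := by
    apply Finset.orderEmbOfFin_unique hc
    · intro t
      rw [h]
      exact mem_imN.mpr ⟨t, rfl⟩
    · exact fun a b hab => hi' hab
  funext t
  apply Fin.val_injective
  have e1 := congrFun f1 t
  have e2 := congrFun f2 t
  rw [e1, e2]


/-- `e*_k(μ̃)` equals the sum, over all generalized horizontal strips `H` of size `k`
in the Ferrers diagram of `μ` (cells `(r,c)` with `c < μ r`, no two cells in the same
column), of the product of the factorials of the row counts of `H`. -/
theorem stmt5 (n k : ℕ) (μ : ℕ → ℕ) (hμ : Antitone μ)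
    (h1 : μ 0 ≤ n) (hvan : ∀ i, n ≤ i → μ i = 0)
    (hk1 : 1 ≤ k) (hkn : k ≤ n) :
    estar n k (fun i => (conjP n μ (i : ℕ) : ℂ))
      = ((∑ H ∈ (Finset.range n ×ˢ Finset.range n).powerset.filter
            (fun H : Finset (ℕ × ℕ) => H.card = k ∧ (∀ p ∈ H, p.2 < μ p.1) ∧
              ∀ p ∈ H, ∀ q ∈ H, p.2 = q.2 → p = q),
          ∏ r ∈ Finset.range n, Nat.factorial (H.filter (fun p => p.1 = r)).card : ℕ) : ℂ) := by
  set monos := Finset.univ.filter (fun i : Fin k → Fin n => StrictMono i) with hmonos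
  set B := (Finset.range n ×ˢ Finset.range n).powerset.filter
            (fun H : Finset (ℕ × ℕ) => H.card = k ∧ (∀ p ∈ H, p.2 < μ p.1) ∧
              ∀ p ∈ H, ∀ q ∈ H, p.2 = q.2 → p = q) with hB
  -- Step 1: B is the disjoint union of strips over images of strictly monotone maps
  have hBU : B = monos.biUnion (fun i => strips n μ (imN i)) := by
    ext H
    simp only [Finset.mem_biUnion, hB, Finset.mem_filter, Finset.mem_powerset, hmonos,
      Finset.mem_univ, true_and]
    constructor
    · rintro ⟨hsub, hcard, hval, hinj⟩
      have hJcard : (H.image Prod.snd).card = k := by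
        rw [Finset.card_image_of_injOn (fun p hp q hq hpq => hinj p hp q hq hpq), hcard]
      have hJsub : ∀ j ∈ H.image Prod.snd, j < n := by
        intro j hj
        obtain ⟨p, hp, rfl⟩ := Finset.mem_image.mp hj
        exact Finset.mem_range.mp (Finset.mem_product.mp (hsub hp)).2
      refine ⟨fun t => ⟨(H.image Prod.snd).orderEmbOfFin hJcard t,
        hJsub _ (Finset.orderEmbOfFin_mem _ hJcard t)⟩, ?_, ?_⟩
      · intro a b hab
        exact ((H.image Prod.snd).orderEmbOfFin hJcard).strictMono hab
      · rw [mem_strips]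
        refine ⟨hsub, hval, ?_, hinj⟩
        have him : imN (fun t => (⟨(H.image Prod.snd).orderEmbOfFin hJcard t,
            hJsub _ (Finset.orderEmbOfFin_mem _ hJcard t)⟩ : Fin n)) = H.image Prod.snd := by
          apply Finset.coe_injective
          rw [imN, Finset.coe_image, Finset.coe_univ, Set.image_univ]
          exact Finset.range_orderEmbOfFin _ hJcard
        rw [him]
    · rintro ⟨i, hi, hHs⟩
      obtain ⟨hsub, hval, him, hinj⟩ := mem_strips.mp hHs
      refine ⟨hsub, ?_, hval, hinj⟩
      rw [card_of_strips hHs, card_imN i hi]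
  have hdisj : (↑monos : Set (Fin k → Fin n)).PairwiseDisjoint
      (fun i => strips n μ (imN i)) := by
    intro i hi i' hi' hne
    simp only [Finset.coe_filter, Set.mem_setOf_eq, hmonos, Finset.mem_univ, true_and] at hi hi'
    apply Finset.disjoint_left.mpr
    intro H h1' h2'
    apply hne
    apply imN_inj hi hi'
    have e1 := (mem_strips.mp h1').2.2.1
    have e2 := (mem_strips.mp h2').2.2.1
    rw [← e1, ← e2]
  -- Step 2: rewrite both sides
  have hnat : ∑ H ∈ B, wgt n H = ∑ i ∈ monos, SS n μ (imN i) := by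
    rw [hBU, Finset.sum_biUnion hdisj]
    rfl
  rw [estar, ← Finset.sum_filter]
  have hterm : ∀ i ∈ monos,
      (∏ t : Fin k, ((fun i : Fin n => (conjP n μ (i : ℕ) : ℂ)) (i t)
        + ((k : ℂ) - 1 - ((t : ℕ) : ℂ))))
        = ((SS n μ (imN i) : ℕ) : ℂ) := by
    intro i hi
    have hi' : StrictMono i := by
      have := Finset.mem_filter.mp hi
      exact this.2
    rw [SS_prod n μ hvan k i hi', Nat.cast_prod]
    apply Finset.prod_congr rfl
    intro t _
    have ht : (t : ℕ) < k := t.isLt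
    rw [Nat.cast_add, Nat.cast_sub (by omega : (t : ℕ) ≤ k - 1),
      Nat.cast_sub (by omega : 1 ≤ k), Nat.cast_one]
  rw [Finset.sum_congr rfl hterm, ← Nat.cast_sum]
  have : ∑ H ∈ B, (∏ r ∈ Finset.range n, Nat.factorial ((H.filter (fun p => p.1 = r)).card))
      = ∑ H ∈ B, wgt n H := rfl
  rw [this, hnat]
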